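/- Assume N ≥ 2, α_N > 0, and K({0}) = 0. Then: (1) if K((1,∞)) = 0, then λ(p) converges to the finite limit K({1}) as p → ∞, and μ(p) → 0 as p → ∞; (2) if K((1,∞)) > 0, then there exist c > 0 and r > 1 such that λ(p) ≥ c r^p for all p > 0, so λ(p) → ∞ and μ(p) → +∞ as p → ∞, and consequently μ attains a global minimum at some finite point p₀ ∈ (0,∞). -/

import Mathlib

/- STATEMENT 9: For N ≥ 2, α_N > 0, K({0}) = 0:
(1) if K((1,∞)) = 0 then λ(p) → K({1}) and μ(p) → 0 as p → ∞;
(2) if K((1,∞)) > 0 then λ(p) ≥ c r^p for some c > 0, r > 1, so λ(p) → ∞ and μ(p) → +∞ as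
p → ∞, and μ attains a global minimum at some finite p₀ ∈ (0,∞). -/

open MeasureTheory Filter Set
open scoped NNReal ENNReal BigOperators Topology

/-- The measure `K = Σₙ n αₙ Kₙ`, `Kₙ` the first marginal of `Aₙ` (arities `1,…,N`). -/
noncomputable def Kmeas {N : ℕ} (α : Fin N → ℝ)
    (A : (n : Fin N) → Measure (Fin ((n : ℕ) + 1) → ℝ≥0)) : Measure ℝ≥0 :=
  ∑ n : Fin N, (((n : ℕ) + 1 : ℝ≥0∞) * ENNReal.ofReal (α n)) •
    ((A n).map (fun a => a 0))

/-- `λ(p) = ∫ a^p dK(a)`. -/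
noncomputable def lamK (K : Measure ℝ≥0) (p : ℝ) : ℝ := ∫ a, (a : ℝ) ^ p ∂K

/-- The spectral function `μ(p) = (λ(p) − 1)/p`. -/
noncomputable def muK (K : Measure ℝ≥0) (p : ℝ) : ℝ := (lamK K p - 1) / p

section Aux
variable {K : Measure ℝ≥0} {R : ℝ≥0}

lemma aux_meas (p : ℝ) : Measurable (fun a : ℝ≥0 => (a:ℝ) ^ p) :=
  measurable_coe_nnreal_real.pow measurable_const

lemma aux_ae_le (hR : K (Ioi R) = 0) : ∀ᵐ a ∂K, a ≤ R := by
  rw [ae_iff]; convert hR using 2; ext a; simp [not_le, Set.mem_Ioi]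

lemma aux_ae_ne (h0 : K {0} = 0) : ∀ᵐ a ∂K, a ≠ 0 := by
  rw [ae_iff]; convert h0 using 2; ext a; simp

lemma aux_int [IsFiniteMeasure K] (hR : K (Ioi R) = 0) {p : ℝ} (hp : 0 ≤ p) :
    Integrable (fun a : ℝ≥0 => (a:ℝ) ^ p) K := by
  refine (integrable_const ((R:ℝ) ^ p)).mono' (aux_meas p).aestronglyMeasurable ?_
  filter_upwards [aux_ae_le hR] with a ha
  rw [Real.norm_eq_abs, abs_of_nonneg (Real.rpow_nonneg a.coe_nonneg p)]
  exact Real.rpow_le_rpow a.coe_nonneg ha hp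

lemma aux_cont [IsFiniteMeasure K] (h0 : K {0} = 0) (hR : K (Ioi R) = 0) (hR1 : 1 ≤ R)
    {p₀ : ℝ} (hp₀ : 0 < p₀) : ContinuousAt (lamK K) p₀ := by
  have hR1' : (1:ℝ) ≤ (R:ℝ) := by exact_mod_cast hR1
  refine continuousAt_of_dominated (bound := fun _ => (R:ℝ) ^ (p₀ + 1))
    (Eventually.of_forall fun p => (aux_meas p).aestronglyMeasurable) ?_
    (integrable_const _) ?_
  · have hmem : Set.Ioo (0:ℝ) (p₀ + 1) ∈ 𝓝 p₀ := Ioo_mem_nhds hp₀ (by linarith)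
    filter_upwards [hmem] with p hp
    filter_upwards [aux_ae_le hR] with a ha
    rw [Real.norm_eq_abs, abs_of_nonneg (Real.rpow_nonneg a.coe_nonneg p)]
    calc (a:ℝ) ^ p ≤ (R:ℝ) ^ p := Real.rpow_le_rpow a.coe_nonneg ha hp.1.le
    _ ≤ (R:ℝ) ^ (p₀ + 1) := Real.rpow_le_rpow_of_exponent_le hR1' hp.2.le
  · filter_upwards [aux_ae_ne h0] with a ha
    exact Real.continuousAt_const_rpow (by exact_mod_cast ha)

lemma aux_lim0 [IsFiniteMeasure K] (h0 : K {0} = 0) (hR : K (Ioi R) = 0) (hR1 : 1 ≤ R) :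
    Tendsto (lamK K) (𝓝[>] (0:ℝ)) (𝓝 (K univ).toReal) := by
  have hR1' : (1:ℝ) ≤ (R:ℝ) := by exact_mod_cast hR1
  have h := tendsto_integral_filter_of_dominated_convergence (μ := K)
    (F := fun p (a : ℝ≥0) => (a:ℝ) ^ p) (f := fun _ => (1:ℝ)) (bound := fun _ => (R:ℝ))
    (l := 𝓝[>] (0:ℝ))
    (Eventually.of_forall fun p => (aux_meas p).aestronglyMeasurable) ?_ (integrable_const _) ?_
  · exact (by simpa [integral_const, Measure.real] using h :
      Tendsto (fun p => ∫ a, (a:ℝ) ^ p ∂K) (𝓝[>] (0:ℝ)) (𝓝 (K univ).toReal))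
  · filter_upwards [Ioc_mem_nhdsGT (zero_lt_one)] with p hp
    filter_upwards [aux_ae_le hR] with a ha
    rw [Real.norm_eq_abs, abs_of_nonneg (Real.rpow_nonneg a.coe_nonneg p)]
    calc (a:ℝ) ^ p ≤ (R:ℝ) ^ p := Real.rpow_le_rpow a.coe_nonneg ha hp.1.le
    _ ≤ (R:ℝ) ^ (1:ℝ) := Real.rpow_le_rpow_of_exponent_le hR1' hp.2
    _ = (R:ℝ) := Real.rpow_one _
  · filter_upwards [aux_ae_ne h0] with a ha
    have hc : ContinuousAt (fun p : ℝ => (a:ℝ) ^ p) 0 :=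
      Real.continuousAt_const_rpow (by exact_mod_cast ha)
    have := hc.tendsto.mono_left (nhdsWithin_le_nhds (s := Set.Ioi (0:ℝ)))
    simpa using this

lemma aux_part1 [IsFiniteMeasure K] (h0 : K {0} = 0) (h1 : K (Ioi 1) = 0) :
    Tendsto (lamK K) atTop (𝓝 (K {1}).toReal) := by
  have h := tendsto_integral_filter_of_dominated_convergence (μ := K)
    (F := fun p (a : ℝ≥0) => (a:ℝ) ^ p)
    (f := Set.indicator {(1:ℝ≥0)} (fun _ => (1:ℝ))) (bound := fun _ => (1:ℝ))
    (l := atTop)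
    (Eventually.of_forall fun p => (aux_meas p).aestronglyMeasurable) ?_ (integrable_const _) ?_
  · have heq : ∫ a, Set.indicator {(1:ℝ≥0)} (fun _ => (1:ℝ)) a ∂K = (K {1}).toReal := by
      rw [integral_indicator (measurableSet_singleton 1)]
      simp
    rwa [heq] at h
  · filter_upwards [Ici_mem_atTop (0:ℝ)] with p hp
    filter_upwards [aux_ae_le h1] with a ha
    rw [Real.norm_eq_abs, abs_of_nonneg (Real.rpow_nonneg a.coe_nonneg p)]
    exact Real.rpow_le_one a.coe_nonneg (by exact_mod_cast ha) hp
  · filter_upwards [aux_ae_le h1, aux_ae_ne h0] with a ha ha0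
    rcases eq_or_lt_of_le ha with rfl | hlt
    · simpa using tendsto_const_nhds (α := ℝ) (x := 1)
    · have h1' : ((a:ℝ)) < 1 := by exact_mod_cast hlt
      have := tendsto_rpow_atTop_of_base_lt_one (a:ℝ) (by linarith [a.coe_nonneg]) h1'
      simpa [Set.indicator, (by exact_mod_cast hlt.ne : (a:ℝ≥0) ≠ 1)] using this

lemma aux_exists_r (h : K (Ioi 1) ≠ 0) : ∃ r : ℝ≥0, 1 < r ∧ K (Ioi r) ≠ 0 := by
  by_contra hcon
  push_neg at hcon
  apply h
  have hsub : Ioi (1:ℝ≥0) ⊆ ⋃ n : ℕ, Ioi (1 + ((n:ℝ≥0)+1)⁻¹) := by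
    intro a ha
    have ha' : (1:ℝ) < (a:ℝ) := by exact_mod_cast ha
    obtain ⟨n, hn⟩ := exists_nat_one_div_lt (by linarith : (0:ℝ) < (a:ℝ) - 1)
    refine Set.mem_iUnion.2 ⟨n, ?_⟩
    have : (1 + ((n:ℝ≥0)+1)⁻¹ : ℝ≥0) < a := by
      rw [← NNReal.coe_lt_coe]
      push_cast
      rw [inv_eq_one_div]
      linarith
    exact this
  refine measure_mono_null hsub (measure_iUnion_null fun n => ?_)
  apply hcon
  have : (0:ℝ≥0) < ((n:ℝ≥0)+1)⁻¹ := by positivity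
  exact lt_add_of_pos_right 1 this

lemma aux_growth [IsFiniteMeasure K] (hR : K (Ioi R) = 0) {r : ℝ≥0} {p : ℝ} (hp : 0 < p) :
    (r:ℝ) ^ p * (K (Ioi r)).toReal ≤ lamK K p := by
  have hint := aux_int hR hp.le
  have h1 : ∫ a in Ioi r, (a:ℝ) ^ p ∂K ≤ lamK K p :=
    setIntegral_le_integral hint (Eventually.of_forall fun a => Real.rpow_nonneg a.coe_nonneg p)
  have h2 : (r:ℝ) ^ p * (K (Ioi r)).toReal ≤ ∫ a in Ioi r, (a:ℝ) ^ p ∂K := by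
    refine setIntegral_ge_of_const_le_real measurableSet_Ioi (measure_ne_top K _) ?_ hint.integrableOn
    intro a ha
    exact Real.rpow_le_rpow r.coe_nonneg (by exact_mod_cast ha.le) hp.le
  linarith

lemma aux_rpow_tendsto {r : ℝ} (hr : 1 < r) : Tendsto (fun p : ℝ => r ^ p) atTop atTop := by
  have h := Real.tendsto_exp_atTop.comp
    ((tendsto_const_mul_atTop_of_pos (Real.log_pos hr)).mpr tendsto_id)
  refine h.congr fun p => ?_
  simp [Function.comp, Real.rpow_def_of_pos (by linarith : (0:ℝ) < r)]

lemma aux_exp_lin {c r : ℝ} (hc : 0 < c) (hr : 1 < r) :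
    Tendsto (fun p : ℝ => (c * r ^ p - 1) / p) atTop atTop := by
  set L := Real.log r with hL
  have hL0 : 0 < L := Real.log_pos hr
  have h1 : Tendsto (fun p : ℝ => Real.exp (L * p) / (L * p) ^ (1:ℕ)) atTop atTop :=
    (Real.tendsto_exp_div_pow_atTop 1).comp
      ((tendsto_const_mul_atTop_of_pos hL0).mpr tendsto_id)
  have h2 : Tendsto (fun p : ℝ => (-1) / p + (c * L) * (Real.exp (L * p) / (L * p) ^ (1:ℕ)))
      atTop atTop := by
    refine Tendsto.add_atTop (C := 0) ?_ (h1.const_mul_atTop (by positivity))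
    have := (tendsto_inv_atTop_zero (𝕜 := ℝ)).neg
    simp only [neg_zero] at this
    refine this.congr fun p => ?_
    rw [neg_div, one_div]
  refine h2.congr' ?_
  filter_upwards [Ioi_mem_atTop (0:ℝ)] with p hp
  have hp0 : (p:ℝ) ≠ 0 := ne_of_gt hp
  rw [Real.rpow_def_of_pos (by linarith : (0:ℝ) < r), ← hL]
  field_simp
  ring

lemma aux_min {f : ℝ → ℝ} (hcont : ∀ p : ℝ, 0 < p → ContinuousAt f p)
    (h0 : Tendsto f (𝓝[>] (0:ℝ)) atTop) (hT : Tendsto f atTop atTop) :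
    ∃ p₀ > (0:ℝ), ∀ p > (0:ℝ), f p₀ ≤ f p := by
  set M := f 1 with hM
  obtain ⟨u, hu, husub⟩ := mem_nhdsGT_iff_exists_Ioc_subset.1
    (h0.eventually (eventually_ge_atTop M))
  obtain ⟨b', hb'⟩ := (hT.eventually (eventually_ge_atTop M)).exists_forall_of_atTop
  set a := min u 1 with ha
  set b := max b' 1 with hb
  have ha0 : 0 < a := lt_min (by exact hu) zero_lt_one
  have hab : a ≤ b := le_trans (min_le_right _ _) (le_max_right _ _)
  have hcontOn : ContinuousOn f (Icc a b) := fun p hp =>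
    ((hcont p (lt_of_lt_of_le ha0 hp.1)).continuousWithinAt)
  obtain ⟨p₀, hp₀mem, hmin⟩ := isCompact_Icc.exists_isMinOn
    ⟨1, min_le_right u 1, le_max_right b' 1⟩ hcontOn
  refine ⟨p₀, lt_of_lt_of_le ha0 hp₀mem.1, fun p hp => ?_⟩
  by_cases hpi : p ∈ Icc a b
  · exact hmin hpi
  · have h1M : f p₀ ≤ M := hmin ⟨min_le_right u 1, le_max_right b' 1⟩
    rcases not_and_or.1 hpi with h | h
    · push_neg at h
      have hpu : p ∈ Ioc 0 u := ⟨hp, le_trans h.le (min_le_left _ _)⟩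
      exact le_trans h1M (husub hpu)
    · push_neg at h
      exact le_trans h1M (hb' p (le_trans (le_max_left _ _) h.le))

end Aux

theorem stmt_9 (N : ℕ) (hN : 2 ≤ N) (α : Fin N → ℝ) (hα : ∀ n, 0 ≤ α n)
    (hsum : ∑ n, α n = 1)
    (hlast : 0 < α ⟨N - 1, by omega⟩)
    (A : (n : Fin N) → Measure (Fin ((n : ℕ) + 1) → ℝ≥0))
    (hprob : ∀ n, IsProbabilityMeasure (A n))
    (hcomp : ∀ n, ∃ R : ℝ≥0, (A n) {a | ∃ k, R < a k} = 0)
    (hperm : ∀ (n : Fin N) (σ : Equiv.Perm (Fin ((n : ℕ) + 1))),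
      (A n).map (fun a k => a (σ k)) = A n)
    (hzero : Kmeas α A {0} = 0) :
    -- (1) if K((1,∞)) = 0 then λ(p) → K({1}) and μ(p) → 0 as p → ∞
    ((Kmeas α A) (Set.Ioi 1) = 0 →
      Tendsto (lamK (Kmeas α A)) atTop (nhds (((Kmeas α A) {1}).toReal)) ∧
      Tendsto (muK (Kmeas α A)) atTop (nhds 0)) ∧
    -- (2) if K((1,∞)) > 0 then λ grows exponentially, λ(p) → ∞, μ(p) → +∞,
    -- and μ attains a global minimum at a finite p₀ > 0
    ((Kmeas α A) (Set.Ioi 1) ≠ 0 →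
      (∃ c > (0 : ℝ), ∃ r > (1 : ℝ), ∀ p > (0 : ℝ), c * r ^ p ≤ lamK (Kmeas α A) p) ∧
      Tendsto (lamK (Kmeas α A)) atTop atTop ∧
      Tendsto (muK (Kmeas α A)) atTop atTop ∧
      ∃ p₀ > (0 : ℝ), ∀ p > (0 : ℝ), muK (Kmeas α A) p₀ ≤ muK (Kmeas α A) p) := by
  classical
  set K := Kmeas α A with hKdef
  have hKs : ∀ s : Set ℝ≥0, MeasurableSet s →
      K s = ∑ n : Fin N, ((n:ℕ)+1 : ℝ≥0∞) * ENNReal.ofReal (α n)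
        * A n ((fun a => a 0) ⁻¹' s) := by
    intro s hs
    rw [hKdef, Kmeas, Measure.finset_sum_apply]
    refine Finset.sum_congr rfl fun n _ => ?_
    rw [Measure.smul_apply, Measure.map_apply (measurable_pi_apply 0) hs, smul_eq_mul]
  have hKuniv : K univ = ∑ n : Fin N, ((n:ℕ)+1 : ℝ≥0∞) * ENNReal.ofReal (α n) := by
    rw [hKs univ MeasurableSet.univ]
    refine Finset.sum_congr rfl fun n _ => ?_
    have h1 : A n ((fun a => a 0) ⁻¹' univ) = 1 := by
      rw [Set.preimage_univ]; exact (hprob n).measure_univ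
    rw [h1, mul_one]
  haveI hfin : IsFiniteMeasure K := by
    constructor
    rw [hKuniv]
    refine ENNReal.sum_lt_top.2 fun n _ => ?_
    exact ENNReal.mul_lt_top (by simp [ENNReal.add_lt_top]) ENNReal.ofReal_lt_top
  -- total mass
  have hT : (K univ).toReal = ∑ n : Fin N, (((n:ℕ):ℝ)+1) * α n := by
    rw [hKuniv, ENNReal.toReal_sum (fun n _ => by
      exact (ENNReal.mul_lt_top (by simp [ENNReal.add_lt_top]) ENNReal.ofReal_lt_top).ne)]
    refine Finset.sum_congr rfl fun n _ => ?_
    rw [ENNReal.toReal_mul, ENNReal.toReal_ofReal (hα n)]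
    have hh : ((((n:ℕ):ℝ≥0∞))+1).toReal = ((n:ℕ):ℝ)+1 := by
      rw [ENNReal.toReal_add (by simp) (by simp)]
      simp
    rw [hh]
  have hT1 : 1 < (K univ).toReal := by
    rw [hT]
    have hsplit : ∑ n : Fin N, (((n:ℕ):ℝ)+1) * α n
        = (∑ n : Fin N, ((n:ℕ):ℝ) * α n) + ∑ n : Fin N, α n := by
      rw [← Finset.sum_add_distrib]
      exact Finset.sum_congr rfl fun n _ => by ring
    have hge : ((N-1 : ℕ):ℝ) * α ⟨N-1, by omega⟩ ≤ ∑ n : Fin N, ((n:ℕ):ℝ) * α n := by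
      have := Finset.single_le_sum (f := fun n : Fin N => ((n:ℕ):ℝ) * α n)
        (fun i _ => mul_nonneg (Nat.cast_nonneg _) (hα i)) (Finset.mem_univ ⟨N-1, by omega⟩)
      simpa using this
    have hN1 : (1:ℝ) ≤ ((N-1 : ℕ):ℝ) := by
      have : 1 ≤ N - 1 := by omega
      exact_mod_cast this
    have hpos : (0:ℝ) < ((N-1 : ℕ):ℝ) * α ⟨N-1, by omega⟩ :=
      mul_pos (by linarith) hlast
    rw [hsplit, hsum]
    linarith
  -- support bound
  choose Rn hRn using hcomp
  set R : ℝ≥0 := 1 ⊔ Finset.univ.sup Rn with hRdef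
  have hR1 : (1:ℝ≥0) ≤ R := le_sup_left
  have hRsupp : K (Ioi R) = 0 := by
    rw [hKs _ measurableSet_Ioi]
    refine Finset.sum_eq_zero fun n _ => ?_
    have hsub : (fun a : Fin ((n:ℕ)+1) → ℝ≥0 => a 0) ⁻¹' Ioi R
        ⊆ {a | ∃ k, Rn n < a k} := by
      intro a ha
      exact ⟨0, lt_of_le_of_lt
        (le_trans (Finset.le_sup (Finset.mem_univ n)) le_sup_right) ha⟩
    rw [measure_mono_null hsub (hRn n), mul_zero]
  constructor
  · -- part 1
    intro h1
    have hlam := aux_part1 hzero h1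
    refine ⟨hlam, ?_⟩
    have h2 := (hlam.sub (tendsto_const_nhds (x := (1:ℝ)))).mul tendsto_inv_atTop_zero
    rw [mul_zero] at h2
    exact h2.congr fun p => (div_eq_mul_inv (lamK K p - 1) p).symm
  · -- part 2
    intro h2
    obtain ⟨r, hr1, hrne⟩ := aux_exists_r h2
    have hr1' : (1:ℝ) < (r:ℝ) := by exact_mod_cast hr1
    set c := (K (Ioi r)).toReal with hcdef
    have hc : 0 < c := ENNReal.toReal_pos hrne (measure_ne_top K _)
    have hgrow : ∀ p > (0:ℝ), c * (r:ℝ) ^ p ≤ lamK K p := by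
      intro p hp
      rw [mul_comm]
      exact aux_growth hRsupp hp
    have hlamT : Tendsto (lamK K) atTop atTop := by
      refine tendsto_atTop_mono' atTop ?_ ((aux_rpow_tendsto hr1').const_mul_atTop hc)
      filter_upwards [Ioi_mem_atTop (0:ℝ)] with p hp
      exact hgrow p hp
    have hmuT : Tendsto (muK K) atTop atTop := by
      refine tendsto_atTop_mono' atTop ?_ (aux_exp_lin hc hr1')
      filter_upwards [Ioi_mem_atTop (0:ℝ)] with p hp
      have hle := (div_le_div_iff_of_pos_right hp).mpr
        (by linarith [hgrow p hp] : c * (r:ℝ) ^ p - 1 ≤ lamK K p - 1)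
      simpa [muK] using hle
    have hmu0 : Tendsto (muK K) (𝓝[>] (0:ℝ)) atTop := by
      have hlam0 := aux_lim0 hzero hRsupp hR1
      have hsub : Tendsto (fun p => lamK K p - 1) (𝓝[>] (0:ℝ))
          (𝓝 ((K univ).toReal - 1)) := hlam0.sub tendsto_const_nhds
      have hmul := Tendsto.pos_mul_atTop (by linarith : (0:ℝ) < (K univ).toReal - 1)
        hsub tendsto_inv_nhdsGT_zero
      exact hmul.congr fun p => (div_eq_mul_inv _ _).symm
    have hcontmu : ∀ p : ℝ, 0 < p → ContinuousAt (muK K) p := by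
      intro p hp
      have h1 : ContinuousAt (lamK K) p := aux_cont hzero hRsupp hR1 hp
      exact ContinuousAt.div (h1.sub continuousAt_const) continuousAt_id (ne_of_gt hp)
    exact ⟨⟨c, hc, (r:ℝ), hr1', hgrow⟩, hlamT, hmuT, aux_min hcontmu hmu0 hmuT⟩
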